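/- Let R be a commutative ring, S a multiplicative subset of R, R[S⁻¹] the localisation of R at S, and (𝒜, ℬ) a cotorsion pair in Mod-R. If 0 → B → A →(φ) M → 0 is exact with φ an 𝒜-cover of an R[S⁻¹]-module M (so A ∈ 𝒜 and B = Ker φ ∈ ℬ), then A and B carry R[S⁻¹]-module structures making this a short exact sequence of R[S⁻¹]-modules; in particular multiplication by every element of S is an automorphism of A and of B. -/

import Mathlib

universe u

open MulOpposite Function

/-- `Ext¹_A(X, Y) = 0`: every short exact sequence `0 → Y → E → X → 0` splits. -/
def Ext1Vanishes (A : Type u) [Ring A] (X Y : Type u) [AddCommGroup X] [Module A X]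
    [AddCommGroup Y] [Module A Y] : Prop :=
  ∀ (E : Type u) [AddCommGroup E] [Module A E], ∀ (i : Y →ₗ[A] E) (p : E →ₗ[A] X),
    Function.Injective i → Function.Surjective p → LinearMap.range i = LinearMap.ker p →
    ∃ s : X →ₗ[A] E, p.comp s = LinearMap.id

/-- `φ : P → M` is a `C`-cover of `M`: `P ∈ C`, every map from a module of `C` to `M`
factors through `φ`, and every endomorphism `e` of `P` with `φ ∘ e = φ` is an automorphism. -/
def IsCover (A : Type u) [Ring A] (C : Set (ModuleCat.{u} A)) (P : ModuleCat.{u} A)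
    (M : Type u) [AddCommGroup M] [Module A M] (φ : P →ₗ[A] M) : Prop :=
  P ∈ C ∧
  (∀ P' ∈ C, ∀ ψ : (P' : Type u) →ₗ[A] M, ∃ h : (P' : Type u) →ₗ[A] (P : Type u),
    φ.comp h = ψ) ∧
  (∀ e : (P : Type u) →ₗ[A] (P : Type u), φ.comp e = φ → Function.Bijective e)

/-- The class `C` is covering: every `A`-module admits a `C`-cover. -/
def IsCoveringClass (A : Type u) [Ring A] (C : Set (ModuleCat.{u} A)) : Prop :=
  ∀ M : ModuleCat.{u} A, ∃ (P : ModuleCat.{u} A) (φ : P →ₗ[A] (M : Type u)),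
    IsCover A C P (M : Type u) φ

/-- `A` carries an `R[S⁻¹]`-module structure which is compatible with its `R`-module
structure and makes `φ` an `R[S⁻¹]`-linear map. -/
def HasCompatibleLocalizedStructure (R : Type u) [CommRing R] (S : Submonoid R)
    (A : Type u) [AddCommGroup A] [Module R A]
    (M : Type u) [AddCommGroup M] [Module R M] [Module (Localization S) M]
    [IsScalarTower R (Localization S) M] (φ : A →ₗ[R] M) : Prop :=
  ∃ m : Module (Localization S) A, by
    letI := m
    exact (∀ (r : R) (a : A), (algebraMap R (Localization S) r) • a = r • a) ∧
      (∀ (q : Localization S) (a : A), φ (q • a) = q • φ a)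

section Aux

variable {R : Type u} [CommRing R] {A : Type u} [AddCommGroup A] [Module R A]

/-- Scalar multiplications are central in the endomorphism ring. -/
theorem algebraMap_end_mem_center (r : R) :
    algebraMap R (Module.End R A) r ∈ Subring.center (Module.End R A) := by
  rw [Subring.mem_center_iff]
  intro g
  ext a
  show g ((algebraMap R (Module.End R A) r) a) = (algebraMap R (Module.End R A) r) (g a)
  rw [Module.algebraMap_end_apply, Module.algebraMap_end_apply, map_smul]

theorem inv_mem_center {T : Type u} [Ring T] (v : Tˣ)
    (hv : (v : T) ∈ Subring.center T) : ((v⁻¹ : Tˣ) : T) ∈ Subring.center T := by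
  rw [Subring.mem_center_iff] at hv ⊢
  intro g
  have h1 : (v : T) * (g * ((v⁻¹ : Tˣ) : T)) = (v : T) * (((v⁻¹ : Tˣ) : T) * g) := by
    rw [← mul_assoc, ← hv g, mul_assoc, Units.mul_inv, mul_one, ← mul_assoc,
      Units.mul_inv, one_mul]
  exact (Units.mul_right_inj v).mp h1

end Aux

/-- **Corollary 2.4.** Let `R` be commutative, `S` a multiplicative subset, `(𝒜, ℬ)` a
cotorsion pair in `Mod-R`, and `0 → B → A → M → 0` exact with `φ : A → M` an `𝒜`-cover of
an `R[S⁻¹]`-module `M` (so `A ∈ 𝒜` and `B = ker φ ∈ ℬ`). Then `A` and `B` carry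
`R[S⁻¹]`-module structures making this a short exact sequence in `Mod-R[S⁻¹]`; in
particular multiplication by every element of `S` is an automorphism of `A` and of `B`. -/
theorem cover_of_localized_module_is_localized (R : Type u) [CommRing R] (S : Submonoid R)
    (𝒜 ℬ : Set (ModuleCat.{u} R))
    (hA : 𝒜 = {A : ModuleCat.{u} R | ∀ B ∈ ℬ, Ext1Vanishes R (A : Type u) (B : Type u)})
    (hB : ℬ = {B : ModuleCat.{u} R | ∀ A ∈ 𝒜, Ext1Vanishes R (A : Type u) (B : Type u)})
    (M : Type u) [AddCommGroup M] [Module R M] [Module (Localization S) M]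
    [IsScalarTower R (Localization S) M]
    (A : ModuleCat.{u} R) (φ : (A : Type u) →ₗ[R] M)
    (hmem : A ∈ 𝒜) (hsurj : Function.Surjective φ)
    (hcover : IsCover R 𝒜 A M φ)
    (hker : ModuleCat.of R (LinearMap.ker φ) ∈ ℬ) :
    HasCompatibleLocalizedStructure R S (A : Type u) M φ ∧
    (∀ s : S, Function.Bijective (fun a : (A : Type u) => (s : R) • a)) ∧
    (∀ s : S, Function.Bijective (fun b : LinearMap.ker φ => (s : R) • b)) := by
  classical
  -- injectivity of the action of `s ∈ S` on `M`
  have hMinj : ∀ s : S, ∀ x y : M, (s : R) • x = (s : R) • y → x = y := by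
    intro s x y hxy
    have hu : IsUnit (algebraMap R (Localization S) (s : R)) :=
      IsLocalization.map_units _ s
    have hxy' : (algebraMap R (Localization S) (s : R)) • x
        = (algebraMap R (Localization S) (s : R)) • y := by
      rw [algebraMap_smul, algebraMap_smul]; exact hxy
    obtain ⟨u, huu⟩ := hu
    rw [← huu] at hxy'
    have h2 := congrArg (fun z => ((u⁻¹ : (Localization S)ˣ) : Localization S) • z) hxy'
    simp only [smul_smul] at h2
    rw [Units.inv_mul, one_smul, one_smul] at h2
    exact h2
  -- the key step: `s •` is bijective on `A`
  have key : ∀ s : S, Function.Bijective (fun a : (A : Type u) => (s : R) • a) := by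
    intro s
    have hu : IsUnit (algebraMap R (Localization S) (s : R)) :=
      IsLocalization.map_units _ s
    set c : Localization S := ((hu.unit⁻¹ : (Localization S)ˣ) : Localization S) with hc
    have hcomm : ∀ (r : R) (x : M), c • (r • x) = r • (c • x) := by
      intro r x
      rw [← algebraMap_smul (Localization S) r x, ← algebraMap_smul (Localization S) r (c • x),
        smul_smul, smul_smul, mul_comm]
    let ψ : (A : Type u) →ₗ[R] M :=
      { toFun := fun a => c • φ a
        map_add' := fun x y => by rw [map_add, smul_add]
        map_smul' := fun r x => by
          dsimp only [RingHom.id_apply]; rw [map_smul]; exact hcomm r (φ x) }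
    obtain ⟨h, hh⟩ := hcover.2.1 A hmem ψ
    have hh' : ∀ a : (A : Type u), φ (h a) = c • φ a := fun a => LinearMap.congr_fun hh a
    have he : φ.comp ((s : R) • h) = φ := by
      ext a
      simp only [LinearMap.comp_apply, LinearMap.smul_apply, map_smul]
      rw [hh' a, ← algebraMap_smul (Localization S) (s : R) (c • φ a), smul_smul,
        ← hu.unit_spec, hc, Units.mul_inv, one_smul]
    have hbij := hcover.2.2 _ he
    constructor
    · intro a b hab
      have hab' : (s : R) • a = (s : R) • b := hab
      have h2 : ((s : R) • h) a = ((s : R) • h) b := by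
        simp only [LinearMap.smul_apply]
        rw [← map_smul, ← map_smul, hab']
      exact hbij.injective h2
    · intro b
      obtain ⟨a, ha⟩ := hbij.surjective b
      exact ⟨h a, ha⟩
  refine ⟨?_, key, ?_⟩
  · -- the localized module structure on `A`
    have hAunit : ∀ s : S, IsUnit (algebraMap R (Module.End R (A : Type u)) (s : R)) := by
      intro s
      rw [Module.End.isUnit_iff]
      exact key s
    -- ring hom into the center of the endomorphism ring
    let g : R →+* Subring.center (Module.End R (A : Type u)) :=
      (algebraMap R (Module.End R (A : Type u))).codRestrict
        (Subring.center (Module.End R (A : Type u))) algebraMap_end_mem_center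
    have hg : ∀ s : S, IsUnit (g (s : R)) := by
      intro s
      set v := (hAunit s).unit with hv
      have hvc : (v : Module.End R (A : Type u)) ∈ Subring.center (Module.End R (A : Type u)) := by
        rw [(hAunit s).unit_spec]; exact algebraMap_end_mem_center _
      refine ⟨⟨⟨(v : Module.End R (A : Type u)), hvc⟩,
        ⟨((v⁻¹ : _ˣ) : Module.End R (A : Type u)), inv_mem_center v hvc⟩,
        ?_, ?_⟩, ?_⟩
      · ext1; exact v.mul_inv
      · ext1; exact v.inv_mul
      · ext1; exact (hAunit s).unit_spec
    let ρ : Localization S →+* Module.End R (A : Type u) :=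
      (Subring.center (Module.End R (A : Type u))).subtype.comp (IsLocalization.lift hg)
    letI m : Module (Localization S) (A : Type u) := Module.compHom _ ρ
    have hsmul : ∀ (q : Localization S) (a : (A : Type u)), q • a = ρ q a := fun _ _ => rfl
    have hcompat : ∀ (r : R) (a : (A : Type u)),
        (algebraMap R (Localization S) r) • a = r • a := by
      intro r a
      rw [hsmul]
      show ((Subring.center (Module.End R (A : Type u))).subtype
        (IsLocalization.lift hg (algebraMap R (Localization S) r))) a = r • a
      rw [IsLocalization.lift_eq]
      rfl
    refine ⟨m, hcompat, ?_⟩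
    intro q a
    obtain ⟨⟨r, s⟩, hq⟩ := IsLocalization.surj (M := S) (S := Localization S) q
    apply hMinj s
    show (s : R) • φ (q • a) = (s : R) • (q • φ a)
    have lhs : (s : R) • φ (q • a) = r • φ a := by
      rw [← map_smul, ← hcompat (s : R) (q • a), ← mul_smul, mul_comm, hq, hcompat, map_smul]
    have rhs : (s : R) • (q • φ a) = r • φ a := by
      rw [← algebraMap_smul (Localization S) (s : R) (q • φ a), ← mul_smul, mul_comm, hq,
        algebraMap_smul]
    rw [lhs, rhs]
  · -- bijectivity on the kernel
    intro s
    constructor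
    · intro a b hab
      have hab' : (s : R) • a = (s : R) • b := hab
      apply Subtype.ext
      apply (key s).injective
      have h2 := congrArg Subtype.val hab'
      exact h2
    · rintro ⟨b, hb⟩
      obtain ⟨a, ha⟩ := (key s).surjective b
      have ha' : (s : R) • a = b := ha
      have haker : a ∈ LinearMap.ker φ := by
        rw [LinearMap.mem_ker]
        apply hMinj s
        rw [smul_zero, ← map_smul, ha']
        exact hb
      exact ⟨⟨a, haker⟩, Subtype.ext ha'⟩
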